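/- Fix an integer N ≥ 1, integers 𝔱_1 > 𝔱_2 > ⋯ > 𝔱_N, an integer x, and an integer n with 1 ≤ n ≤ N − 1. Let S be the set of all z ∈ ℂ with Im z ≠ 0 satisfying Σ_{a=1}^{N−n} 1/(z − x + a) = Σ_{r=1}^{N} 1/(z − 𝔱_r). Then S is invariant under complex conjugation and has at most two elements; consequently the equation has either 0 or 2 non-real roots, and in the latter case the two non-real roots are complex conjugates of each other. -/

import Mathlib

open Complex Finset Polynomial

section helpers

lemma sign_prod_aux (s : Finset ℤ) (p : ℤ) (hp : p ∉ s) :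
    0 < (-1:ℝ)^((s.filter (fun c => p < c)).card) * ∏ c ∈ s, ((p:ℝ) - c) := by
  classical
  rw [← Finset.prod_filter_mul_prod_filter_not s (fun c => p < c)]
  have h1 : 0 < ∏ c ∈ s.filter (fun c => ¬ p < c), ((p:ℝ) - c) := by
    apply Finset.prod_pos
    intro c hc
    simp only [Finset.mem_filter, not_lt] at hc
    have hcp : c ≠ p := fun h => hp (h ▸ hc.1)
    have : (c:ℝ) < (p:ℝ) := by exact_mod_cast lt_of_le_of_ne hc.2 hcp
    linarith
  have h2 : 0 < ∏ c ∈ s.filter (fun c => p < c), ((c:ℝ) - p) := by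
    apply Finset.prod_pos
    intro c hc
    simp only [Finset.mem_filter] at hc
    have : (p:ℝ) < (c:ℝ) := by exact_mod_cast hc.2
    linarith
  have h3' : (-1:ℝ)^((s.filter (fun c => p < c)).card)
      * ∏ c ∈ s.filter (fun c => p < c), ((p:ℝ) - c)
      = ∏ c ∈ s.filter (fun c => p < c), ((c:ℝ) - p) := by
    rw [← Finset.prod_const, ← Finset.prod_mul_distrib]
    exact Finset.prod_congr rfl (fun c _ => by ring)
  rw [← mul_assoc, h3']
  exact mul_pos h2 h1

lemma derivative_finset_prod {R : Type*} [CommRing R] (s : Finset ℤ) (f : ℤ → R[X]) :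
    Polynomial.derivative (∏ c ∈ s, f c) =
      ∑ b ∈ s, (∏ c ∈ s.erase b, f c) * Polynomial.derivative (f b) := by
  classical
  induction s using Finset.induction_on with
  | empty => simp
  | insert _ _ ha ih =>
    rename_i a s
    rw [Finset.prod_insert ha, derivative_mul, ih, Finset.sum_insert ha, Finset.erase_insert ha,
      Finset.mul_sum, mul_comm (Polynomial.derivative (f a)) (∏ c ∈ s, f c)]
    congr 1
    apply Finset.sum_congr rfl
    intro b hb
    have hba : b ≠ a := fun h => ha (h ▸ hb)
    rw [Finset.erase_insert_of_ne (Ne.symm hba), Finset.prod_insert (by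
      simp only [Finset.mem_erase]
      exact fun h => ha h.2)]
    ring

lemma eval_derivative_prod_sub {K : Type*} [Field K] (s : Finset ℤ) (g : ℤ → K) (z : K) :
    Polynomial.eval z (Polynomial.derivative (∏ c ∈ s, (X - C (g c)))) =
      ∑ b ∈ s, ∏ c ∈ s.erase b, (z - g c) := by
  rw [derivative_finset_prod, Polynomial.eval_finset_sum]
  apply Finset.sum_congr rfl
  intro b _
  simp [Polynomial.eval_prod]

lemma eval_derivative_at_root (s : Finset ℤ) (p : ℤ) (hp : p ∈ s) :
    Polynomial.eval (p:ℝ) (Polynomial.derivative (∏ c ∈ s, (X - C (c:ℝ)))) =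
      ∏ c ∈ s.erase p, ((p:ℝ) - c) := by
  rw [eval_derivative_prod_sub]
  apply Finset.sum_eq_single_of_mem p hp
  intro b hb hbp
  refine Finset.prod_eq_zero (Finset.mem_erase.mpr ⟨Ne.symm hbp, hp⟩) ?_
  simp

lemma eval_derivative_sum_div (s : Finset ℤ) (z : ℂ) (hz : ∀ c : ℤ, z - (c:ℂ) ≠ 0) :
    Polynomial.eval z (Polynomial.derivative (∏ c ∈ s, (X - C (c:ℂ)))) =
      (∏ c ∈ s, (z - (c:ℂ))) * ∑ c ∈ s, 1/(z - (c:ℂ)) := by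
  rw [eval_derivative_prod_sub, Finset.mul_sum]
  apply Finset.sum_congr rfl
  intro b hb
  rw [mul_one_div, ← Finset.mul_prod_erase s _ hb, mul_comm (z - (b:ℂ)), mul_div_assoc,
    div_self (hz b), mul_one]

lemma ivt_sign_change' {f : ℝ → ℝ} (hf : Continuous f) {u v : ℝ} (huv : u < v)
    (h : f u * f v < 0) : ∃ r ∈ Set.Ioo u v, f r = 0 := by
  rcases mul_neg_iff.mp h with ⟨hu, hv⟩ | ⟨hu, hv⟩
  · obtain ⟨r, hr, hr0⟩ := intermediate_value_Ioo' huv.le hf.continuousOn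
      (Set.mem_Ioo.mpr ⟨hv, hu⟩)
    exact ⟨r, hr, hr0⟩
  · obtain ⟨r, hr, hr0⟩ := intermediate_value_Ioo huv.le hf.continuousOn
      (Set.mem_Ioo.mpr ⟨hu, hv⟩)
    exact ⟨r, hr, hr0⟩

lemma alt_sign_roots (f : ℝ → ℝ) (hf : Continuous f) (e : ℕ) (s : Finset ℤ)
    (hsign : ∀ p ∈ s, 0 < (-1:ℝ)^((s.filter (fun c => p < c)).card + e) * f p) :
    ∃ T : Finset ℝ, s.card ≤ T.card + 1 ∧
      ∀ r ∈ T, f r = 0 ∧ ∃ lo ∈ s, ∃ hi ∈ s, (lo:ℝ) < r ∧ r < hi := by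
  classical
  induction s using Finset.strongInduction with
  | _ s ih =>
    by_cases hcard : s.card ≤ 1
    · exact ⟨∅, by simpa using hcard, by simp⟩
    push_neg at hcard
    have hne : s.Nonempty := Finset.card_pos.mp (by omega)
    have hps : s.min' hne ∈ s := s.min'_mem hne
    set p := s.min' hne with hpdef
    have hs' : (s.erase p).Nonempty := by
      rw [← Finset.card_pos, Finset.card_erase_of_mem hps]; omega
    set p2 := (s.erase p).min' hs' with hp2def
    have hp2e : p2 ∈ s.erase p := (s.erase p).min'_mem hs'
    have hp2s : p2 ∈ s := Finset.mem_of_mem_erase hp2e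
    have hp2p : p2 ≠ p := Finset.ne_of_mem_erase hp2e
    have hmin : ∀ c ∈ s, p ≤ c := fun c hc => s.min'_le c hc
    have hmin2 : ∀ c ∈ s.erase p, p2 ≤ c := fun c hc => (s.erase p).min'_le c hc
    have hplt : p < p2 := lt_of_le_of_ne (hmin p2 hp2s) (Ne.symm hp2p)
    have hfp : s.filter (fun c => p < c) = s.erase p := by
      ext c
      simp only [Finset.mem_filter, Finset.mem_erase]
      constructor
      · rintro ⟨h1, h2⟩; exact ⟨by omega, h1⟩
      · rintro ⟨h1, h2⟩; exact ⟨h2, lt_of_le_of_ne (hmin c h2) (Ne.symm h1)⟩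
    have hfp2 : s.filter (fun c => p2 < c) = (s.erase p).erase p2 := by
      ext c
      simp only [Finset.mem_filter, Finset.mem_erase]
      constructor
      · rintro ⟨h1, h2⟩
        have hcp : c ≠ p := by omega
        exact ⟨by omega, hcp, h1⟩
      · rintro ⟨h1, h2, h3⟩
        exact ⟨h3, lt_of_le_of_ne (hmin2 c (Finset.mem_erase.mpr ⟨h2, h3⟩)) (Ne.symm h1)⟩
    have hsign' : ∀ q ∈ s.erase p,
        0 < (-1:ℝ)^(((s.erase p).filter (fun c => q < c)).card + e) * f q := by
      intro q hq
      have hfe : (s.erase p).filter (fun c => q < c) = s.filter (fun c => q < c) := by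
        ext c
        simp only [Finset.mem_filter, Finset.mem_erase]
        constructor
        · rintro ⟨⟨h1, h2⟩, h3⟩; exact ⟨h2, h3⟩
        · rintro ⟨h1, h2⟩
          have hpq : p ≤ q := hmin q (Finset.mem_of_mem_erase hq)
          exact ⟨⟨by omega, h1⟩, h2⟩
      rw [hfe]
      exact hsign q (Finset.mem_of_mem_erase hq)
    obtain ⟨T', hT'card, hT'⟩ := ih (s.erase p) (Finset.erase_ssubset hps) hsign'
    have hA := hsign p hps
    have hB := hsign p2 hp2s
    rw [hfp, Finset.card_erase_of_mem hps] at hA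
    rw [hfp2, Finset.card_erase_of_mem hp2e, Finset.card_erase_of_mem hps] at hB
    have hprod : f ↑p * f ↑p2 < 0 := by
      have hm := mul_pos hA hB
      have hodd : Odd ((s.card - 1 + e) + (s.card - 1 - 1 + e)) := ⟨s.card + e - 2, by omega⟩
      have heq : ((-1:ℝ)^(s.card - 1 + e) * f ↑p) * ((-1:ℝ)^(s.card - 1 - 1 + e) * f ↑p2)
          = -(f ↑p * f ↑p2) := by
        rw [mul_mul_mul_comm, ← pow_add, hodd.neg_one_pow]; ring
      rw [heq] at hm; linarith
    have hping : (p:ℝ) < (p2:ℝ) := by exact_mod_cast hplt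
    obtain ⟨r, hrIoo, hr0⟩ := ivt_sign_change' hf hping hprod
    have hrT' : r ∉ T' := by
      intro hr
      obtain ⟨-, lo, hlo, -, -, hlor, -⟩ := hT' r hr
      have h1 : p2 ≤ lo := hmin2 lo hlo
      have h2 : (p2:ℝ) ≤ (lo:ℝ) := by exact_mod_cast h1
      have h3 := hrIoo.2
      linarith
    refine ⟨insert r T', ?_, ?_⟩
    · rw [Finset.card_insert_of_notMem hrT']
      rw [Finset.card_erase_of_mem hps] at hT'card
      omega
    · intro r' hr'
      rcases Finset.mem_insert.mp hr' with rfl | hr'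
      · exact ⟨hr0, p, hps, p2, hp2s, hrIoo.1, hrIoo.2⟩
      · obtain ⟨h0, lo, hlo, hi, hhi, hl, hh⟩ := hT' r' hr'
        exact ⟨h0, lo, Finset.mem_of_mem_erase hlo, hi, Finset.mem_of_mem_erase hhi, hl, hh⟩

end helpers

theorem stmt_0 (N : ℕ) (hN : 1 ≤ N) (t : Fin N → ℤ) (ht : StrictAnti t)
    (x : ℤ) (n : ℕ) (hn1 : 1 ≤ n) (hnN : n ≤ N - 1)
    (S : Set ℂ)
    (hS : S = {z : ℂ | z.im ≠ 0 ∧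
      ∑ a ∈ Finset.Icc 1 (N - n), (1 : ℂ) / (z - (x : ℂ) + (a : ℂ)) =
      ∑ r : Fin N, (1 : ℂ) / (z - (t r : ℂ))}) :
    (∀ z ∈ S, (starRingEnd ℂ) z ∈ S) ∧ S.encard ≤ 2 := by
  classical
  set M : ℕ := N - n with hMdef
  have hM1 : 1 ≤ M := by omega
  -- conjugation invariance
  have hconj : ∀ z ∈ S, (starRingEnd ℂ) z ∈ S := by
    intro z hz
    rw [hS] at hz ⊢
    obtain ⟨him, heq⟩ := hz
    constructor
    · simpa using him
    · have h := congrArg (starRingEnd ℂ) heq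
      simpa [map_sum, map_div₀, map_sub, map_add, map_one, map_intCast, map_natCast] using h
  refine ⟨hconj, ?_⟩
  -- the finite sets
  set blockA : Finset ℤ := Finset.Icc (x - (M:ℤ)) (x - 1) with hblockdef
  set T : Finset ℤ := Finset.image t Finset.univ with hTdef
  set sA : Finset ℤ := blockA \ T with hsAdef
  set sB : Finset ℤ := T \ blockA with hsBdef
  have htinj : Function.Injective t := ht.injective
  have hTcard : T.card = N := by
    rw [hTdef, Finset.card_image_of_injective _ htinj, Finset.card_univ, Fintype.card_fin]
  have hblockcard : blockA.card = M := by
    rw [hblockdef, Int.card_Icc]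
    omega
  set a : ℕ := sA.card with hadef
  set b : ℕ := sB.card with hbdef
  have hab : a < b := by
    have h1 : a + (blockA ∩ T).card = M := by
      rw [hadef, hsAdef, ← hblockcard]
      exact Finset.card_sdiff_add_card_inter blockA T
    have h2 : b + (T ∩ blockA).card = N := by
      rw [hbdef, hsBdef, ← hTcard]
      exact Finset.card_sdiff_add_card_inter T blockA
    have h3 : (blockA ∩ T).card = (T ∩ blockA).card := by rw [Finset.inter_comm]
    omega
  have hb1 : 1 ≤ b := by omega
  have hmemA : ∀ p ∈ sA, x - (M:ℤ) ≤ p ∧ p ≤ x - 1 := by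
    intro p hp
    have h := (Finset.mem_sdiff.mp hp).1
    rw [hblockdef, Finset.mem_Icc] at h
    exact h
  have hmemB : ∀ q ∈ sB, q < x - (M:ℤ) ∨ x - 1 < q := by
    intro q hq
    have h := (Finset.mem_sdiff.mp hq).2
    rw [hblockdef, Finset.mem_Icc] at h
    omega
  -- the polynomials
  set U : Polynomial ℝ := ∏ c ∈ sA, (X - C (c:ℝ)) with hUdef
  set V : Polynomial ℝ := ∏ c ∈ sB, (X - C (c:ℝ)) with hVdef
  set W : Polynomial ℝ := Polynomial.derivative U * V - U * Polynomial.derivative V with hWdef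
  have hUmonic : U.Monic := by
    rw [hUdef]; exact monic_prod_of_monic _ _ fun c _ => monic_X_sub_C _
  have hVmonic : V.Monic := by
    rw [hVdef]; exact monic_prod_of_monic _ _ fun c _ => monic_X_sub_C _
  have hUdeg : U.natDegree = a := by
    have hne : ∀ c ∈ sA, (X - C (c:ℝ)) ≠ 0 := fun c _ => Polynomial.X_sub_C_ne_zero _
    have h1 : ∀ c ∈ sA, (X - C (c:ℝ)).natDegree = 1 := fun c _ => Polynomial.natDegree_X_sub_C _
    rw [hUdef, Polynomial.natDegree_prod _ _ hne, Finset.sum_congr rfl h1, Finset.sum_const,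
      smul_eq_mul, mul_one]
  have hVdeg : V.natDegree = b := by
    have hne : ∀ c ∈ sB, (X - C (c:ℝ)) ≠ 0 := fun c _ => Polynomial.X_sub_C_ne_zero _
    have h1 : ∀ c ∈ sB, (X - C (c:ℝ)).natDegree = 1 := fun c _ => Polynomial.natDegree_X_sub_C _
    rw [hVdef, Polynomial.natDegree_prod _ _ hne, Finset.sum_congr rfl h1, Finset.sum_const,
      smul_eq_mul, mul_one]
  have hUcoeff : U.coeff a = 1 := by rw [← hUdeg]; exact hUmonic.coeff_natDegree
  have hVcoeff : V.coeff b = 1 := by rw [← hVdeg]; exact hVmonic.coeff_natDegree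
  have hV'coeff : (Polynomial.derivative V).coeff (b - 1) = (b:ℝ) := by
    rw [Polynomial.coeff_derivative]
    have hb' : b - 1 + 1 = b := by omega
    rw [hb', hVcoeff, one_mul]
    rw [Nat.cast_sub hb1]
    push_cast
    ring
  have hV'deg : (Polynomial.derivative V).natDegree = b - 1 := by
    have h1 := Polynomial.natDegree_derivative_le V
    rw [hVdeg] at h1
    refine le_antisymm h1 (Polynomial.le_natDegree_of_ne_zero ?_)
    rw [hV'coeff]
    exact Nat.cast_ne_zero.mpr (by omega)
  -- coefficient and degree of W
  have hWfacts : W.coeff (a + b - 1) = (a:ℝ) - (b:ℝ) ∧ W.natDegree ≤ a + b - 1 := by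
    by_cases ha0 : a = 0
    · have hsAe : sA = ∅ := Finset.card_eq_zero.mp (by omega)
      have hU1 : U = 1 := by rw [hUdef, hsAe, Finset.prod_empty]
      have hWeq : W = -Polynomial.derivative V := by
        rw [hWdef, hU1]
        simp
      constructor
      · rw [hWeq, Polynomial.coeff_neg]
        have : a + b - 1 = b - 1 := by omega
        rw [this, hV'coeff, ha0]
        push_cast
        ring
      · rw [hWeq, Polynomial.natDegree_neg, hV'deg]
        omega
    · have ha1 : 1 ≤ a := by omega
      have hU'coeff : (Polynomial.derivative U).coeff (a - 1) = (a:ℝ) := by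
        rw [Polynomial.coeff_derivative]
        have ha' : a - 1 + 1 = a := by omega
        rw [ha', hUcoeff, one_mul]
        rw [Nat.cast_sub ha1]
        push_cast
        ring
      have hU'deg : (Polynomial.derivative U).natDegree = a - 1 := by
        have h1 := Polynomial.natDegree_derivative_le U
        rw [hUdeg] at h1
        refine le_antisymm h1 (Polynomial.le_natDegree_of_ne_zero ?_)
        rw [hU'coeff]
        exact Nat.cast_ne_zero.mpr (by omega)
      have c1 : (Polynomial.derivative U * V).coeff (a + b - 1) = (a:ℝ) := by
        have e1 : a + b - 1 = (Polynomial.derivative U).natDegree + V.natDegree := by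
          rw [hU'deg, hVdeg]; omega
        rw [e1, Polynomial.coeff_mul_degree_add_degree, Polynomial.leadingCoeff,
          Polynomial.leadingCoeff, hU'deg, hVdeg, hU'coeff, hVcoeff, mul_one]
      have c2 : (U * Polynomial.derivative V).coeff (a + b - 1) = (b:ℝ) := by
        have e2 : a + b - 1 = U.natDegree + (Polynomial.derivative V).natDegree := by
          rw [hUdeg, hV'deg]; omega
        rw [e2, Polynomial.coeff_mul_degree_add_degree, Polynomial.leadingCoeff,
          Polynomial.leadingCoeff, hUdeg, hV'deg, hUcoeff, hV'coeff, one_mul]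
      constructor
      · rw [hWdef, Polynomial.coeff_sub, c1, c2]
      · rw [hWdef]
        refine le_trans (Polynomial.natDegree_sub_le _ _) (max_le ?_ ?_)
        · refine le_trans (Polynomial.natDegree_mul_le) ?_
          rw [hU'deg, hVdeg]; omega
        · refine le_trans (Polynomial.natDegree_mul_le) ?_
          rw [hUdeg, hV'deg]; omega
  have hWne : W ≠ 0 := by
    intro h
    have := hWfacts.1
    rw [h, Polynomial.coeff_zero] at this
    have hh : (a:ℝ) < (b:ℝ) := by exact_mod_cast hab
    linarith
  -- evaluation formulas at integer points
  have hevalU : ∀ y : ℝ, U.eval y = ∏ c ∈ sA, (y - (c:ℝ)) := by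
    intro y
    rw [hUdef, Polynomial.eval_prod]
    exact Finset.prod_congr rfl (fun c _ => by simp)
  have hevalV : ∀ y : ℝ, V.eval y = ∏ c ∈ sB, (y - (c:ℝ)) := by
    intro y
    rw [hVdef, Polynomial.eval_prod]
    exact Finset.prod_congr rfl (fun c _ => by simp)
  have hWevalA : ∀ p ∈ sA, W.eval (p:ℝ) =
      (∏ c ∈ sA.erase p, ((p:ℝ) - c)) * ∏ c ∈ sB, ((p:ℝ) - c) := by
    intro p hp
    have h0 : U.eval (p:ℝ) = 0 := by
      rw [hevalU]
      exact Finset.prod_eq_zero hp (sub_self _)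
    rw [hWdef, Polynomial.eval_sub, Polynomial.eval_mul, Polynomial.eval_mul, h0, zero_mul,
      sub_zero]
    congr 1
    · rw [hUdef]
      exact eval_derivative_at_root sA p hp
    · exact hevalV _
  have hWevalB : ∀ q ∈ sB, W.eval (q:ℝ) =
      -((∏ c ∈ sA, ((q:ℝ) - c)) * ∏ c ∈ sB.erase q, ((q:ℝ) - c)) := by
    intro q hq
    have h0 : V.eval (q:ℝ) = 0 := by
      rw [hevalV]
      exact Finset.prod_eq_zero hq (sub_self _)
    rw [hWdef, Polynomial.eval_sub, Polynomial.eval_mul, Polynomial.eval_mul, h0, mul_zero,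
      zero_sub, neg_inj]
    congr 1
    · exact hevalU _
    · rw [hVdef]
      exact eval_derivative_at_root sB q hq
  have hferase : ∀ (s : Finset ℤ) (p : ℤ),
      (s.erase p).filter (fun c => p < c) = s.filter (fun c => p < c) := by
    intro s p
    ext c
    simp only [Finset.mem_filter, Finset.mem_erase]
    constructor
    · rintro ⟨⟨h1, h2⟩, h3⟩; exact ⟨h2, h3⟩
    · rintro ⟨h1, h2⟩; exact ⟨⟨by omega, h1⟩, h2⟩
  -- split of sB
  set sBp : Finset ℤ := sB.filter (fun c => x - 1 < c) with hsBpdef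
  set sBm : Finset ℤ := sB.filter (fun c => c < x - (M:ℤ)) with hsBmdef
  have hdisjmp : Disjoint sBm sBp := by
    rw [Finset.disjoint_left]
    intro q h1 h2
    rw [hsBmdef, Finset.mem_filter] at h1
    rw [hsBpdef, Finset.mem_filter] at h2
    have : (1:ℤ) ≤ (M:ℤ) := by exact_mod_cast hM1
    omega
  have hBsplit : sBm ∪ sBp = sB := by
    ext q
    simp only [Finset.mem_union, hsBmdef, hsBpdef, Finset.mem_filter]
    constructor
    · rintro (⟨h, -⟩ | ⟨h, -⟩) <;> exact h
    · intro h
      rcases hmemB q h with h1 | h1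
      · exact Or.inl ⟨h, h1⟩
      · exact Or.inr ⟨h, h1⟩
  have hBcard : sBm.card + sBp.card = b := by
    rw [hbdef, ← hBsplit, Finset.card_union_of_disjoint hdisjmp]
  -- sign hypotheses
  have hsignA : ∀ p ∈ sA,
      0 < (-1:ℝ)^((sA.filter (fun c => p < c)).card + sBp.card) * W.eval (p:ℝ) := by
    intro p hp
    have hpB : p ∉ sB := by
      intro hq
      exact (Finset.mem_sdiff.mp hq).2 (Finset.mem_sdiff.mp hp).1
    have h1 := sign_prod_aux (sA.erase p) p (Finset.notMem_erase p sA)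
    rw [hferase] at h1
    have h2 := sign_prod_aux sB p hpB
    have hk2 : sB.filter (fun c => p < c) = sBp := by
      rw [hsBpdef]
      ext q
      simp only [Finset.mem_filter]
      constructor
      · rintro ⟨hq, hlt⟩
        refine ⟨hq, ?_⟩
        have := hmemA p hp
        rcases hmemB q hq with h | h <;> omega
      · rintro ⟨hq, hlt⟩
        refine ⟨hq, ?_⟩
        have := hmemA p hp
        rcases hmemB q hq with h | h <;> omega
    rw [hk2] at h2
    rw [hWevalA p hp]
    exact lt_of_lt_of_eq (mul_pos h1 h2) (by ring)
  have hsignBp : ∀ q ∈ sBp,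
      0 < (-1:ℝ)^((sBp.filter (fun c => q < c)).card + 1) * W.eval (q:ℝ) := by
    intro q hq
    have hqmem := Finset.mem_filter.mp (hsBpdef ▸ hq)
    obtain ⟨hqB, hqgt⟩ := hqmem
    have hqA : q ∉ sA := by
      intro h
      exact (Finset.mem_sdiff.mp hqB).2 (Finset.mem_sdiff.mp h).1
    have h1 := sign_prod_aux sA q hqA
    have hk1 : sA.filter (fun c => q < c) = ∅ := by
      rw [Finset.filter_eq_empty_iff]
      intro c hc
      have := hmemA c hc
      omega
    rw [hk1, Finset.card_empty, pow_zero, one_mul] at h1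
    have h2 := sign_prod_aux (sB.erase q) q (Finset.notMem_erase q sB)
    rw [hferase] at h2
    have hk2 : sB.filter (fun c => q < c) = sBp.filter (fun c => q < c) := by
      rw [hsBpdef]
      ext c
      simp only [Finset.mem_filter]
      constructor
      · rintro ⟨hc, hlt⟩
        exact ⟨⟨hc, by omega⟩, hlt⟩
      · rintro ⟨⟨hc, -⟩, hlt⟩
        exact ⟨hc, hlt⟩
    rw [hk2] at h2
    rw [hWevalB q hqB]
    exact lt_of_lt_of_eq (mul_pos h1 h2) (by ring)
  have hsignBm : ∀ q ∈ sBm,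
      0 < (-1:ℝ)^((sBm.filter (fun c => q < c)).card + (a + sBp.card + 1)) * W.eval (q:ℝ) := by
    intro q hq
    have hqmem := Finset.mem_filter.mp (hsBmdef ▸ hq)
    obtain ⟨hqB, hqlt⟩ := hqmem
    have hqA : q ∉ sA := by
      intro h
      exact (Finset.mem_sdiff.mp hqB).2 (Finset.mem_sdiff.mp h).1
    have h1 := sign_prod_aux sA q hqA
    have hk1 : sA.filter (fun c => q < c) = sA := by
      apply Finset.filter_true_of_mem
      intro c hc
      have := hmemA c hc
      omega
    rw [hk1, ← hadef] at h1
    have h2 := sign_prod_aux (sB.erase q) q (Finset.notMem_erase q sB)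
    rw [hferase] at h2
    have hk2 : sB.filter (fun c => q < c) = sBm.filter (fun c => q < c) ∪ sBp := by
      ext c
      simp only [Finset.mem_filter, Finset.mem_union, hsBmdef, hsBpdef]
      constructor
      · rintro ⟨hc, hlt⟩
        rcases hmemB c hc with h | h
        · exact Or.inl ⟨⟨hc, h⟩, hlt⟩
        · exact Or.inr ⟨hc, h⟩
      · rintro (⟨⟨hc, -⟩, hlt⟩ | ⟨hc, h⟩)
        · exact ⟨hc, hlt⟩
        · refine ⟨hc, ?_⟩
          have : (1:ℤ) ≤ (M:ℤ) := by exact_mod_cast hM1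
          omega
    have hdisj2 : Disjoint (sBm.filter (fun c => q < c)) sBp :=
      Finset.disjoint_of_subset_left (Finset.filter_subset _ _) hdisjmp
    have hcard2 : (sB.filter (fun c => q < c)).card
        = (sBm.filter (fun c => q < c)).card + sBp.card := by
      rw [hk2, Finset.card_union_of_disjoint hdisj2]
    rw [hcard2] at h2
    rw [hWevalB q hqB]
    exact lt_of_lt_of_eq (mul_pos h1 h2) (by ring)
  -- produce the real roots
  obtain ⟨TA, hTAcard, hTAmem⟩ := alt_sign_roots (fun y => W.eval y) W.continuous sBp.card sA hsignA
  obtain ⟨TBp, hTBpcard, hTBpmem⟩ := alt_sign_roots (fun y => W.eval y) W.continuous 1 sBp hsignBp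
  obtain ⟨TBm, hTBmcard, hTBmmem⟩ :=
    alt_sign_roots (fun y => W.eval y) W.continuous (a + sBp.card + 1) sBm hsignBm
  -- locations
  have hlocA : ∀ r ∈ TA, (x:ℝ) - (M:ℕ) < r ∧ r < (x:ℝ) - 1 := by
    intro r hr
    obtain ⟨-, lo, hlo, hi, hhi, h1, h2⟩ := hTAmem r hr
    have hl := (hmemA lo hlo).1
    have hh := (hmemA hi hhi).2
    have hl' : (x:ℝ) - (M:ℕ) ≤ (lo:ℝ) := by exact_mod_cast hl
    have hh' : (hi:ℝ) ≤ (x:ℝ) - 1 := by exact_mod_cast hh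
    constructor <;> linarith
  have hlocBp : ∀ r ∈ TBp, (x:ℝ) - 1 < r := by
    intro r hr
    obtain ⟨-, lo, hlo, -, -, h1, -⟩ := hTBpmem r hr
    have hl := (Finset.mem_filter.mp (hsBpdef ▸ hlo)).2
    have hl' : (x:ℝ) - 1 < (lo:ℝ) := by exact_mod_cast hl
    linarith
  have hlocBm : ∀ r ∈ TBm, r < (x:ℝ) - (M:ℕ) := by
    intro r hr
    obtain ⟨-, -, -, hi, hhi, -, h2⟩ := hTBmmem r hr
    have hh := (Finset.mem_filter.mp (hsBmdef ▸ hhi)).2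
    have hh' : (hi:ℝ) < (x:ℝ) - (M:ℕ) := by exact_mod_cast hh
    linarith
  have hMR : (1:ℝ) ≤ (M:ℕ) := by exact_mod_cast hM1
  have hd1 : Disjoint TA TBp := by
    rw [Finset.disjoint_left]
    intro r h1 h2
    have ha1 := (hlocA r h1).2
    have ha2 := hlocBp r h2
    linarith
  have hd2 : Disjoint TA TBm := by
    rw [Finset.disjoint_left]
    intro r h1 h2
    have ha1 := (hlocA r h1).1
    have ha2 := hlocBm r h2
    linarith
  have hd3 : Disjoint TBp TBm := by
    rw [Finset.disjoint_left]
    intro r h1 h2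
    have ha1 := hlocBp r h1
    have ha2 := hlocBm r h2
    linarith
  set Tall : Finset ℝ := (TA ∪ TBp) ∪ TBm with hTalldef
  have hTallcard : a + b ≤ Tall.card + 3 := by
    have h1 : Tall.card = TA.card + TBp.card + TBm.card := by
      rw [hTalldef, Finset.card_union_of_disjoint (Finset.disjoint_union_left.mpr ⟨hd2, hd3⟩),
        Finset.card_union_of_disjoint hd1]
    omega
  have hTallroot : ∀ r ∈ Tall, W.eval r = 0 := by
    intro r hr
    rcases Finset.mem_union.mp hr with hr' | hr'
    · rcases Finset.mem_union.mp hr' with hr'' | hr''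
      · exact (hTAmem r hr'').1
      · exact (hTBpmem r hr'').1
    · exact (hTBmmem r hr').1
  -- complex roots
  set Wc : Polynomial ℂ := W.map (algebraMap ℝ ℂ) with hWcdef
  have hWcne : Wc ≠ 0 := by
    rw [hWcdef]
    exact Polynomial.map_ne_zero hWne
  have hWcdeg : Wc.natDegree ≤ a + b - 1 := by
    rw [hWcdef]
    exact le_trans Polynomial.natDegree_map_le hWfacts.2
  set Zc : Finset ℂ := Wc.roots.toFinset with hZcdef
  have hZccard : Zc.card ≤ a + b - 1 :=
    le_trans (Multiset.toFinset_card_le _) (le_trans (Polynomial.card_roots' Wc) hWcdeg)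
  set F1 : Finset ℂ := Tall.image (fun r : ℝ => (r:ℂ)) with hF1def
  have hF1card : F1.card = Tall.card :=
    Finset.card_image_of_injective _ Complex.ofReal_injective
  have hF1sub : F1 ⊆ Zc := by
    intro z hz
    rw [hF1def, Finset.mem_image] at hz
    obtain ⟨r, hr, rfl⟩ := hz
    rw [hZcdef, Multiset.mem_toFinset, Polynomial.mem_roots']
    refine ⟨hWcne, ?_⟩
    show Wc.eval ((r:ℝ):ℂ) = 0
    have hcast : ((r:ℝ):ℂ) = algebraMap ℝ ℂ r := rfl
    rw [hWcdef, hcast, Polynomial.eval_map, Polynomial.eval₂_at_apply, hTallroot r hr, map_zero]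
  set F2 : Finset ℂ := Zc.filter (fun z => z.im ≠ 0) with hF2def
  have hdisjF : Disjoint F1 F2 := by
    rw [Finset.disjoint_left]
    intro z h1 h2
    rw [hF1def, Finset.mem_image] at h1
    obtain ⟨r, -, rfl⟩ := h1
    rw [hF2def, Finset.mem_filter] at h2
    exact h2.2 (Complex.ofReal_im r)
  have hcards : F1.card + F2.card ≤ Zc.card := by
    rw [← Finset.card_union_of_disjoint hdisjF]
    exact Finset.card_le_card
      (Finset.union_subset hF1sub (hF2def ▸ Finset.filter_subset _ _))
  have hF2card : F2.card ≤ 2 := by omega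
  -- membership of S in F2
  have hSsub : S ⊆ (F2 : Set ℂ) := by
    intro z hz
    rw [hS] at hz
    obtain ⟨him, heqz⟩ := hz
    have hzc : ∀ c : ℤ, z - (c:ℂ) ≠ 0 := by
      intro c h
      apply him
      have h' := congrArg Complex.im h
      simpa using h'
    have hre1 : ∑ a ∈ Finset.Icc 1 M, (1:ℂ)/(z - (x:ℂ) + (a:ℂ))
        = ∑ p ∈ blockA, 1/(z - (p:ℂ)) := by
      rw [hblockdef]
      refine Finset.sum_nbij' (fun (a : ℕ) => x - (a:ℤ)) (fun (p : ℤ) => (x - p).toNat)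
        ?_ ?_ ?_ ?_ ?_
      · intro a ha
        simp only [Finset.mem_Icc] at ha ⊢
        omega
      · intro p hp
        simp only [Finset.mem_Icc] at hp ⊢
        omega
      · intro a ha
        simp only [Finset.mem_Icc] at ha
        show (x - (x - (a:ℤ))).toNat = a
        omega
      · intro p hp
        simp only [Finset.mem_Icc] at hp
        show x - ((x - p).toNat : ℤ) = p
        omega
      · intro a ha
        have hcast : ((x - (a:ℤ) : ℤ) : ℂ) = (x:ℂ) - (a:ℂ) := by push_cast; ring
        rw [hcast]
        ring_nf
    have hre2 : ∑ r : Fin N, (1:ℂ)/(z - (t r : ℂ)) = ∑ q ∈ T, 1/(z - (q:ℂ)) := by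
      rw [hTdef, Finset.sum_image (fun i _ j _ h => htinj h)]
    have heqBlock : ∑ p ∈ blockA, (1:ℂ)/(z - (p:ℂ)) = ∑ q ∈ T, 1/(z - (q:ℂ)) := by
      rw [← hre1, ← hre2]
      exact heqz
    have hsplit1 : ∑ p ∈ sA, (1:ℂ)/(z - (p:ℂ)) + ∑ p ∈ blockA ∩ T, (1:ℂ)/(z - (p:ℂ))
        = ∑ p ∈ blockA, (1:ℂ)/(z - (p:ℂ)) := by
      rw [hsAdef, ← Finset.sdiff_inter_self_left blockA T]
      exact Finset.sum_sdiff Finset.inter_subset_left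
    have hsplit2 : ∑ q ∈ sB, (1:ℂ)/(z - (q:ℂ)) + ∑ p ∈ T ∩ blockA, (1:ℂ)/(z - (p:ℂ))
        = ∑ q ∈ T, (1:ℂ)/(z - (q:ℂ)) := by
      rw [hsBdef, ← Finset.sdiff_inter_self_left T blockA]
      exact Finset.sum_sdiff Finset.inter_subset_left
    have hmid : ∑ p ∈ T ∩ blockA, (1:ℂ)/(z - (p:ℂ)) = ∑ p ∈ blockA ∩ T, (1:ℂ)/(z - (p:ℂ)) := by
      rw [Finset.inter_comm]
    have heqAB : ∑ p ∈ sA, (1:ℂ)/(z - (p:ℂ)) = ∑ q ∈ sB, 1/(z - (q:ℂ)) := by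
      have h := hsplit1.trans (heqBlock.trans hsplit2.symm)
      rw [hmid] at h
      exact add_right_cancel h
    have hmapU : U.map (algebraMap ℝ ℂ) = ∏ c ∈ sA, (X - C ((c:ℤ):ℂ)) := by
      rw [hUdef, Polynomial.map_prod]
      refine Finset.prod_congr rfl (fun c _ => ?_)
      rw [Polynomial.map_sub, Polynomial.map_X, Polynomial.map_C]
      simp
    have hmapV : V.map (algebraMap ℝ ℂ) = ∏ c ∈ sB, (X - C ((c:ℤ):ℂ)) := by
      rw [hVdef, Polynomial.map_prod]
      refine Finset.prod_congr rfl (fun c _ => ?_)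
      rw [Polynomial.map_sub, Polynomial.map_X, Polynomial.map_C]
      simp
    have hUz : Polynomial.eval z (U.map (algebraMap ℝ ℂ)) = ∏ c ∈ sA, (z - (c:ℂ)) := by
      rw [hmapU, Polynomial.eval_prod]
      exact Finset.prod_congr rfl (fun c _ => by simp)
    have hVz : Polynomial.eval z (V.map (algebraMap ℝ ℂ)) = ∏ c ∈ sB, (z - (c:ℂ)) := by
      rw [hmapV, Polynomial.eval_prod]
      exact Finset.prod_congr rfl (fun c _ => by simp)
    have hU'z : Polynomial.eval z ((Polynomial.derivative U).map (algebraMap ℝ ℂ))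
        = (∏ c ∈ sA, (z - (c:ℂ))) * ∑ c ∈ sA, 1/(z - (c:ℂ)) := by
      rw [← Polynomial.derivative_map, hmapU]
      exact eval_derivative_sum_div sA z hzc
    have hV'z : Polynomial.eval z ((Polynomial.derivative V).map (algebraMap ℝ ℂ))
        = (∏ c ∈ sB, (z - (c:ℂ))) * ∑ c ∈ sB, 1/(z - (c:ℂ)) := by
      rw [← Polynomial.derivative_map, hmapV]
      exact eval_derivative_sum_div sB z hzc
    have hWcz : Wc.eval z = 0 := by
      rw [hWcdef, hWdef, Polynomial.map_sub, Polynomial.map_mul, Polynomial.map_mul,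
        Polynomial.eval_sub, Polynomial.eval_mul, Polynomial.eval_mul, hU'z, hUz, hV'z, hVz,
        heqAB]
      ring
    show z ∈ (F2 : Set ℂ)
    rw [Finset.mem_coe, hF2def, Finset.mem_filter, hZcdef, Multiset.mem_toFinset,
      Polynomial.mem_roots']
    exact ⟨⟨hWcne, hWcz⟩, him⟩
  calc S.encard ≤ (F2 : Set ℂ).encard := Set.encard_mono hSsub
    _ = F2.card := Set.encard_coe_eq_coe_finsetCard F2
    _ ≤ 2 := by exact_mod_cast hF2card
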